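/- Let K be a field, G a group, α a nontrivial unit of K[G] with inverse β having supports A and B respectively, and suppose 1 ∈ A ∩ B. Then the sets E = B⁻¹A and F = BA⁻¹ witness the failure of the unique product property: every element of the multiset EF occurs with multiplicity at least 2. -/

import Mathlib

open scoped Pointwise

lemma key_pair {K : Type*} [Field K] {G : Type*} [Group G] [DecidableEq G]
    (α β : MonoidAlgebra K G) (hαβ : α * β = 1)
    {a b : G} (ha : a ∈ α.coeff.support) (hb : b ∈ β.coeff.support) (hab : a * b ≠ 1) :
    ∃ a' ∈ α.coeff.support, ∃ b' ∈ β.coeff.support, a' * b' = a * b ∧ (a', b') ≠ (a, b) := by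
  by_contra hcon
  push_neg at hcon
  have hval : (α * β).coeff (a * b) = α.coeff a * β.coeff b := by
    rw [MonoidAlgebra.mul_apply, Finsupp.sum, Finset.sum_eq_single_of_mem a ha]
    · rw [Finsupp.sum, Finset.sum_eq_single_of_mem b hb, if_pos rfl]
      intro b' hb' hne
      rw [if_neg]
      intro heq
      have := hcon a ha b' hb' heq
      rw [Prod.mk.injEq] at this
      exact hne this.2
    · intro a' ha' hne
      rw [Finsupp.sum]
      apply Finset.sum_eq_zero
      intro b' hb'
      rw [if_neg]
      intro heq
      have := hcon a' ha' b' hb' heq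
      rw [Prod.mk.injEq] at this
      exact hne this.1
  rw [hαβ] at hval
  have h0 : (1 : MonoidAlgebra K G).coeff (a * b) = 0 := by
    rw [MonoidAlgebra.one_def, MonoidAlgebra.coeff_single, Finsupp.single_apply, if_neg (fun h => hab h.symm)]
  rw [h0] at hval
  exact mul_ne_zero (Finsupp.mem_support_iff.mp ha) (Finsupp.mem_support_iff.mp hb) hval.symm

theorem unit_supports_non_unique_products {K : Type*} [Field K] {G : Type*} [Group G]
    [DecidableEq G] (α β : MonoidAlgebra K G)
    (hαβ : α * β = 1) (hβα : β * α = 1)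
    (hnontriv : 2 ≤ α.coeff.support.card)
    (h1A : (1 : G) ∈ α.coeff.support) (h1B : (1 : G) ∈ β.coeff.support) :
    ∀ e ∈ β.coeff.support⁻¹ * α.coeff.support, ∀ f ∈ β.coeff.support * α.coeff.support⁻¹,
      ∃ e' ∈ β.coeff.support⁻¹ * α.coeff.support, ∃ f' ∈ β.coeff.support * α.coeff.support⁻¹,
        e' * f' = e * f ∧ (e', f') ≠ (e, f) := by
  intro e he f hf
  rw [Finset.mem_mul] at he hf
  obtain ⟨xinv, hx, y, hy, hxy⟩ := he
  obtain ⟨x, hxB, rfl⟩ := Finset.mem_inv.mp hx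
  obtain ⟨z, hzB, winv, hw, hzw⟩ := hf
  obtain ⟨w, hwA, rfl⟩ := Finset.mem_inv.mp hw
  subst hxy hzw
  have memE : ∀ {p : G}, p ∈ β.coeff.support → ∀ {q : G}, q ∈ α.coeff.support →
      p⁻¹ * q ∈ β.coeff.support⁻¹ * α.coeff.support := fun {p} hp {q} hq =>
    Finset.mul_mem_mul (Finset.inv_mem_inv hp) hq
  have memF : ∀ {p : G}, p ∈ β.coeff.support → ∀ {q : G}, q ∈ α.coeff.support →
      p * q⁻¹ ∈ β.coeff.support * α.coeff.support⁻¹ := fun {p} hp {q} hq =>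
    Finset.mul_mem_mul hp (Finset.inv_mem_inv hq)
  by_cases hyz : y * z = 1
  · by_cases hy1 : y = 1
    · subst hy1
      have hz1 : z = 1 := by simpa using hyz
      subst hz1
      by_cases hwx : w * x = 1
      · obtain ⟨a, haA, hane⟩ := Finset.exists_mem_ne hnontriv w
        have hx' : x = w⁻¹ := eq_inv_of_mul_eq_one_right hwx
        refine ⟨1⁻¹ * a, memE h1B haA, 1 * a⁻¹, memF h1B haA, ?_, ?_⟩
        · subst hx'; group
        · intro hpq
          have h1 := (Prod.mk.injEq _ _ _ _ ▸ hpq : _ ∧ _).1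
          subst hx'
          simp only [inv_one, one_mul, mul_one, inv_inv] at h1
          exact hane h1
      · obtain ⟨w', hw'A, x', hx'B, heq, hne⟩ := key_pair α β hαβ hwA hxB hwx
        refine ⟨x'⁻¹ * 1, memE hx'B h1A, 1 * w'⁻¹, memF h1B hw'A, ?_, ?_⟩
        · have h : x'⁻¹ * w'⁻¹ = x⁻¹ * w⁻¹ := by
            rw [← mul_inv_rev, ← mul_inv_rev, heq]
          simp only [mul_one, one_mul]
          exact h
        · intro hpq
          obtain ⟨h1, h2⟩ := Prod.mk.injEq _ _ _ _ ▸ hpq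
          apply hne
          simp only [mul_one, one_mul, inv_inj] at h1 h2
          rw [h1, h2]
    · have hz : z = y⁻¹ := eq_inv_of_mul_eq_one_right hyz
      subst hz
      refine ⟨x⁻¹ * 1, memE hxB h1A, 1 * w⁻¹, memF h1B hwA, ?_, ?_⟩
      · group
      · intro hpq
        have h1 := (Prod.mk.injEq _ _ _ _ ▸ hpq : _ ∧ _).1
        exact hy1 (mul_left_cancel h1).symm
  · obtain ⟨y', hy'A, z', hz'B, heq, hne⟩ := key_pair α β hαβ hy hzB hyz
    refine ⟨x⁻¹ * y', memE hxB hy'A, z' * w⁻¹, memF hz'B hwA, ?_, ?_⟩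
    · calc x⁻¹ * y' * (z' * w⁻¹) = x⁻¹ * (y' * z') * w⁻¹ := by group
        _ = x⁻¹ * (y * z) * w⁻¹ := by rw [heq]
        _ = x⁻¹ * y * (z * w⁻¹) := by group
    · intro hpq
      obtain ⟨h1, h2⟩ := Prod.mk.injEq _ _ _ _ ▸ hpq
      apply hne
      rw [mul_left_cancel h1, mul_right_cancel h2]
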